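/- Strict inclusion of the Hölder dome in the GAP dome (Theorem 2, second part): let x ∈ ℝ^n and u ∈ Δ be such that P(x) < P(0) = (1/2)‖y‖₂² and P(x) > D(u) (i.e., (x,u) is not primal-dual optimal). Then D_new(x,u) is a strict subset of D_gap(x,u); i.e., there exists u₀ ∈ D_gap(x,u) with u₀ ∉ D_new(x,u). -/
import Mathlib


/-- Euclidean norm of a vector in ℝ^m. -/
noncomputable def norm2 {m : ℕ} (v : Fin m → ℝ) : ℝ := Real.sqrt (∑ i, v i ^ 2)

/-- ℓ1 norm of a vector in ℝ^n. -/
def norm1 {n : ℕ} (x : Fin n → ℝ) : ℝ := ∑ i, |x i|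

/-- Canonical inner product on ℝ^m. -/
def dot {m : ℕ} (a u : Fin m → ℝ) : ℝ := ∑ i, a i * u i

/-- Lasso primal objective P(x) = (1/2)‖y − Ax‖₂² + λ‖x‖₁. -/
noncomputable def Pobj {m n : ℕ} (A : Matrix (Fin m) (Fin n) ℝ) (y : Fin m → ℝ)
    (lam : ℝ) (x : Fin n → ℝ) : ℝ :=
  (1 / 2) * norm2 (y - A.mulVec x) ^ 2 + lam * norm1 x

/-- Lasso dual objective D(u) = (1/2)‖y‖₂² − (1/2)‖y − u‖₂². -/
noncomputable def Dobj {m : ℕ} (y u : Fin m → ℝ) : ℝ :=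
  (1 / 2) * norm2 y ^ 2 - (1 / 2) * norm2 (y - u) ^ 2

/-- Dual feasibility: u ∈ Δ iff |⟨a_i, u⟩| ≤ λ for every column a_i of A. -/
def feas {m n : ℕ} (A : Matrix (Fin m) (Fin n) ℝ) (lam : ℝ) (u : Fin m → ℝ) : Prop :=
  ∀ i : Fin n, |dot (fun j => A j i) u| ≤ lam

lemma norm2_nonneg' {m : ℕ} (v : Fin m → ℝ) : 0 ≤ norm2 v := Real.sqrt_nonneg _

lemma norm2_sq' {m : ℕ} (v : Fin m → ℝ) : norm2 v ^ 2 = ∑ i, v i ^ 2 :=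
  Real.sq_sqrt (Finset.sum_nonneg fun _ _ => sq_nonneg _)

lemma norm2_smul' {m : ℕ} (t : ℝ) (v : Fin m → ℝ) :
    norm2 (fun i => t * v i) = |t| * norm2 v := by
  unfold norm2
  rw [show ∑ i, (t * v i) ^ 2 = t ^ 2 * ∑ i, v i ^ 2 by
      rw [Finset.mul_sum]; exact Finset.sum_congr rfl fun i _ => by ring,
    Real.sqrt_mul (sq_nonneg t), Real.sqrt_sq_eq_abs]

lemma dot_self_eq' {m : ℕ} (v : Fin m → ℝ) : dot v v = norm2 v ^ 2 := by
  rw [norm2_sq']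
  exact Finset.sum_congr rfl fun i _ => by rw [sq]

lemma dot_add_mul' {m : ℕ} (a c v : Fin m → ℝ) (t : ℝ) :
    dot a (fun i => c i + t * v i) = dot a c + t * dot a v := by
  unfold dot
  rw [Finset.mul_sum, ← Finset.sum_add_distrib]
  exact Finset.sum_congr rfl fun i _ => by ring

lemma dot_sub' {m : ℕ} (a y c : Fin m → ℝ) :
    dot a (fun i => y i - c i) = dot a y - dot a c := by
  unfold dot
  rw [← Finset.sum_sub_distrib]
  exact Finset.sum_congr rfl fun i _ => by ring

lemma expand_sub_sq' {m : ℕ} (y b : Fin m → ℝ) :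
    ∑ i, (y i - b i) ^ 2 = ∑ i, y i ^ 2 - 2 * dot b y + dot b b := by
  unfold dot
  rw [Finset.mul_sum, ← Finset.sum_sub_distrib, ← Finset.sum_add_distrib]
  exact Finset.sum_congr rfl fun i _ => by ring

lemma dot_cs' {m : ℕ} (a v : Fin m → ℝ) : dot a v ≤ norm2 a * norm2 v :=
  Real.sum_mul_le_sqrt_mul_sqrt _ _ _

set_option maxHeartbeats 1000000 in
/-- Theorem 2, second part: strict inclusion of the Hölder dome in the GAP dome
when P(x) < P(0) = (1/2)‖y‖₂² and (x,u) is not primal-dual optimal. -/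
theorem holder_dome_strict_subset_gap_dome (m n : ℕ) (hm : 0 < m) (hn : 0 < n)
    (A : Matrix (Fin m) (Fin n) ℝ) (y : Fin m → ℝ) (lam : ℝ) (hlam : 0 < lam)
    (x : Fin n → ℝ) (u : Fin m → ℝ) (hu : feas A lam u)
    (c : Fin m → ℝ) (hc : c = fun i => (y i + u i) / 2)
    (r : ℝ) (hr : r = (1 / 2) * norm2 (y - u))
    (hP0 : Pobj A y lam x < (1 / 2) * norm2 y ^ 2)
    (hopt : Dobj y u < Pobj A y lam x) :
    ∃ u₀ : Fin m → ℝ,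
      (norm2 (u₀ - c) ≤ r ∧
        dot (y - c) u₀ ≤ dot (y - c) c + (Pobj A y lam x - Dobj y u) - r ^ 2) ∧
      ¬ (norm2 (u₀ - c) ≤ r ∧ dot (A.mulVec x) u₀ ≤ lam * norm1 x) := by
  have hci : ∀ i, c i = (y i + u i) / 2 := fun i => by rw [hc]
  set b : Fin m → ℝ := A.mulVec x with hbdef
  set g : Fin m → ℝ := fun i => y i - c i with hgdef
  set gap : ℝ := Pobj A y lam x - Dobj y u with hgap
  have hr0 : 0 ≤ r := by
    rw [hr]; have := norm2_nonneg' (y - u); linarith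
  have h4r : norm2 (y - u) ^ 2 = 4 * r ^ 2 := by rw [hr]; ring
  have hDobj : Dobj y u = (1 / 2) * norm2 y ^ 2 - 2 * r ^ 2 := by
    unfold Dobj; rw [h4r]; ring
  have hrpos : 0 < r := by
    rcases hr0.lt_or_eq with h | h
    · exact h
    · exfalso; rw [hDobj, ← h] at hopt; norm_num at hopt; linarith
  have hr2pos : 0 < r ^ 2 := by positivity
  have hgap_pos : 0 < gap := by rw [hgap]; linarith
  have hgap_lt : gap < 2 * r ^ 2 := by rw [hgap, hDobj]; linarith
  -- norm of g
  have hgy : g = fun i => (1 / 2) * ((y - u) i) := by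
    funext i; simp only [hgdef, hci i, Pi.sub_apply]; ring
  have hnormg : norm2 g = r := by
    rw [hgy, norm2_smul', hr]
    rw [abs_of_nonneg (by norm_num : (0:ℝ) ≤ (1/2:ℝ))]
  have hgg : dot g g = r ^ 2 := by rw [dot_self_eq', hnormg]
  -- positivity of ‖b‖
  have hbb_nonneg : 0 ≤ dot b b := by
    rw [dot_self_eq']; positivity
  have hn1 : 0 ≤ norm1 x := Finset.sum_nonneg fun _ _ => abs_nonneg _
  have hbbpos : 0 < dot b b := by
    rcases hbb_nonneg.lt_or_eq with h | h
    · exact h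
    · exfalso
      have h2 : ∑ i, b i ^ 2 = 0 := by
        rw [dot_self_eq', norm2_sq'] at h; exact h.symm
      have hb0 : ∀ i, b i = 0 := by
        intro i
        have := (Finset.sum_eq_zero_iff_of_nonneg
          (fun i _ => sq_nonneg (b i))).1 h2 i (Finset.mem_univ i)
        exact pow_eq_zero_iff (two_ne_zero) |>.1 this
      have heq : norm2 (y - b) = norm2 y := by
        unfold norm2; congr 1
        exact Finset.sum_congr rfl fun i _ => by
          simp [Pi.sub_apply, hb0 i]
      have : Pobj A y lam x = (1/2) * norm2 y ^ 2 + lam * norm1 x := by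
        unfold Pobj; rw [← hbdef, heq]
      rw [this] at hP0
      nlinarith [mul_nonneg hlam.le hn1]
  -- the gap identity
  have hgapEq : gap = lam * norm1 x + (1 / 2) * dot b b - dot b y + 2 * r ^ 2 := by
    have h1 : norm2 (y - b) ^ 2 = ∑ i, y i ^ 2 - 2 * dot b y + dot b b := by
      rw [norm2_sq', ← expand_sub_sq' y b]
      exact Finset.sum_congr rfl fun i _ => by rw [Pi.sub_apply]
    have h2 : norm2 y ^ 2 = ∑ i, y i ^ 2 := norm2_sq' y
    rw [hgap, hDobj]
    unfold Pobj
    rw [← hbdef, h1, h2]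
    ring
  set t : ℝ := (gap - r ^ 2) / r ^ 2 with htdef
  have ht : t * r ^ 2 = gap - r ^ 2 := div_mul_cancel₀ _ (ne_of_gt hr2pos)
  refine ⟨fun i => c i + t * g i, ⟨?_, ?_⟩, ?_⟩
  · -- in the ball
    have heq : ((fun i => c i + t * g i) - c) = fun i => t * g i := by
      funext i; simp
    rw [heq, norm2_smul', hnormg]
    have ht1 : t ≤ 1 := by
      rw [htdef, div_le_one hr2pos]; linarith
    have ht2 : -1 ≤ t := by
      rw [htdef, le_div_iff₀ hr2pos]; linarith
    have habs : |t| ≤ 1 := abs_le.2 ⟨ht2, ht1⟩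
    calc |t| * r ≤ 1 * r := mul_le_mul_of_nonneg_right habs hr0
    _ = r := one_mul r
  · -- GAP halfspace
    have hyc : y - c = g := funext fun i => rfl
    rw [hyc, dot_add_mul', hgg, ht]
    linarith
  · -- violates the Hölder constraint
    rintro ⟨-, hle⟩
    rw [dot_add_mul'] at hle
    set S : ℝ := dot b g with hSdef
    set B : ℝ := norm2 b with hBdef
    have hB2 : dot b b = B ^ 2 := dot_self_eq' b
    have hBnn : 0 ≤ B := norm2_nonneg' b
    have hBpos : 0 < B := by nlinarith
    have hby : dot b y = dot b c + S := by
      have h := dot_sub' b y c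
      rw [← hgdef] at h
      rw [hSdef, h]; ring
    have hCS : S ≤ B * r := by
      have h := dot_cs' b g
      rw [hnormg, ← hBdef] at h
      exact h
    have hlx : lam * norm1 x = gap - (1 / 2) * B ^ 2 + dot b c + S - 2 * r ^ 2 := by
      rw [hgapEq, hby, hB2]; ring
    have hTr : (dot b c + t * S - lam * norm1 x) * r ^ 2
        = (gap - 2 * r ^ 2) * (S - r ^ 2) + (1 / 2) * B ^ 2 * r ^ 2 := by
      rw [hlx]
      linear_combination S * ht
    have hTpos : 0 < (dot b c + t * S - lam * norm1 x) * r ^ 2 := by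
      rw [hTr]
      rcases le_or_gt S (r ^ 2) with hS | hS
      · nlinarith [mul_nonneg (by linarith : (0:ℝ) ≤ 2 * r ^ 2 - gap)
          (by linarith : (0:ℝ) ≤ r ^ 2 - S), mul_pos (mul_pos hBpos hBpos) hr2pos]
      · have h1 : 0 < gap * (S - r ^ 2) :=
          mul_pos hgap_pos (by linarith)
        have h2 : 0 ≤ r ^ 2 * (B * r - S) :=
          mul_nonneg hr2pos.le (by linarith)
        have h3 : 0 ≤ r ^ 2 * (B - 2 * r) ^ 2 :=
          mul_nonneg hr2pos.le (sq_nonneg _)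
        nlinarith [h1, h2, h3]
    have : 0 < dot b c + t * S - lam * norm1 x := by
      by_contra hcon
      push_neg at hcon
      nlinarith [mul_nonneg (neg_nonneg.2 hcon) hr2pos.le]
    linarith
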